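/- Suppose the data are linearly separable, i.e., there exists (w₀, b₀) with y i * (⟪w₀, x i⟫ + b₀) ≥ 1 for all i, so that the two-class gap satisfies G > 0. Suppose C > 2/G² (i.e., C > C_large). If (w, b, ξ) minimizes the soft margin objective ½‖w‖² + C * Σ_i ξ i over the set {(w, b, ξ) : y i * (⟪w, x i⟫ + b) ≥ 1 − ξ i and ξ i ≥ 0 for all i}, then ξ i = 0 for all i and (w, b) is a hard margin solution, i.e., it is hard-margin feasible and minimizes ½‖w‖² over all hard-margin feasible pairs. -/

import Mathlib

open scoped RealInnerProductSpace BigOperators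

variable {E : Type*} [NormedAddCommGroup E] [InnerProductSpace ℝ E]

/-- The two-class gap: the infimum distance between the convex hulls of the two classes. -/
noncomputable def twoClassGap {n : ℕ} (x : Fin n → E) (y : Fin n → ℝ) : ℝ :=
  sInf {g : ℝ | ∃ cp ∈ convexHull ℝ (x '' {i | y i = 1}),
    ∃ cm ∈ convexHull ℝ (x '' {i | y i = -1}), g = ‖cp - cm‖}

/-- `(w, b)` is feasible for the hard margin SVM problem. -/
def HardFeasible {n : ℕ} (x : Fin n → E) (y : Fin n → ℝ) (w : E) (b : ℝ) : Prop :=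
  ∀ i, 1 ≤ y i * (⟪w, x i⟫ + b)

/-- `(w, b)` is a hard margin SVM solution. -/
def HardSolution {n : ℕ} (x : Fin n → E) (y : Fin n → ℝ) (w : E) (b : ℝ) : Prop :=
  HardFeasible x y w b ∧
    ∀ w' : E, ∀ b' : ℝ, HardFeasible x y w' b' → (1 / 2) * ‖w‖ ^ 2 ≤ (1 / 2) * ‖w'‖ ^ 2

/-- `(w, b, ξ)` is feasible for the soft margin SVM problem. -/
def SoftFeasible {n : ℕ} (x : Fin n → E) (y : Fin n → ℝ) (w : E) (b : ℝ)
    (ξ : Fin n → ℝ) : Prop :=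
  ∀ i, 1 - ξ i ≤ y i * (⟪w, x i⟫ + b) ∧ 0 ≤ ξ i

/-- The soft margin SVM objective at cost `C`. -/
noncomputable def softObjective {n : ℕ} (C : ℝ) (w : E) (ξ : Fin n → ℝ) : ℝ :=
  (1 / 2) * ‖w‖ ^ 2 + C * ∑ i, ξ i

/-- Points of a set all in an upper halfspace: so is the hull. -/
lemma hull_halfspace_ge (w : E) (b r : ℝ) (S : Set E)
    (h : ∀ z ∈ S, r ≤ ⟪w, z⟫ + b) : ∀ u ∈ convexHull ℝ S, r ≤ ⟪w, u⟫ + b := by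
  have hconv : Convex ℝ {z : E | r ≤ ⟪w, z⟫ + b} := by
    intro z1 hz1 z2 hz2 a c ha hc hac
    simp only [Set.mem_setOf_eq, inner_add_right, real_inner_smul_right] at *
    have har : a * r + c * r = r := by rw [← add_mul, hac, one_mul]
    have hb : a * b + c * b = b := by rw [← add_mul, hac, one_mul]
    nlinarith [mul_le_mul_of_nonneg_left hz1 ha, mul_le_mul_of_nonneg_left hz2 hc]
  exact fun u hu => convexHull_min h hconv hu

/-- Points of a set all in a lower halfspace: so is the hull. -/
lemma hull_halfspace_le (w : E) (b r : ℝ) (S : Set E)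
    (h : ∀ z ∈ S, ⟪w, z⟫ + b ≤ r) : ∀ u ∈ convexHull ℝ S, ⟪w, u⟫ + b ≤ r := by
  intro u hu
  have := hull_halfspace_ge (-w) (-b) (-r) S (by
    intro z hz
    have := h z hz
    simp only [inner_neg_left]
    linarith) u hu
  simp only [inner_neg_left] at this
  linarith

/-- Arithmetic core: with margin bound and large cost, the total slack vanishes. -/
lemma slack_eq_zero {a g c s : ℝ} (hg : 0 < g) (hs : 0 ≤ s) (ha : 0 ≤ a)
    (hmargin : 2 - s ≤ a * g) (hc : 2 < c * g ^ 2)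
    (hobj : (1 / 2) * a ^ 2 + c * s ≤ 2 / g ^ 2) : s = 0 := by
  have hg2 : 0 < g ^ 2 := by positivity
  have h := mul_le_mul_of_nonneg_right hobj hg2.le
  rw [div_mul_cancel₀ _ (ne_of_gt hg2)] at h
  refine le_antisymm ?_ hs
  rcases le_or_gt s 2 with h2 | h2
  · have h1 : 0 ≤ 2 - s := by linarith
    have hsq : (2 - s) ^ 2 ≤ (a * g) ^ 2 := by
      nlinarith [mul_self_le_mul_self h1 hmargin]
    nlinarith [hsq, sq_nonneg s, mul_nonneg hs (by linarith : (0:ℝ) ≤ c * g ^ 2 - 2)]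
  · have h6 : 2 * (c * g ^ 2) ≤ s * (c * g ^ 2) :=
      mul_le_mul_of_nonneg_right h2.le (by linarith)
    nlinarith [sq_nonneg (a * g)]

theorem large_C_soft_margin_is_hard_margin {n : ℕ} (x : Fin n → E) (y : Fin n → ℝ)
    (hy : ∀ i, y i = 1 ∨ y i = -1)
    (hpos : ∃ i, y i = 1) (hneg : ∃ i, y i = -1)
    (hsep : ∃ w₀ : E, ∃ b₀ : ℝ, HardFeasible x y w₀ b₀)
    (C : ℝ) (hC : 2 / twoClassGap x y ^ 2 < C)
    (w : E) (b : ℝ) (ξ : Fin n → ℝ)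
    (hfeas : SoftFeasible x y w b ξ)
    (hmin : ∀ w' : E, ∀ b' : ℝ, ∀ ξ' : Fin n → ℝ, SoftFeasible x y w' b' ξ' →
      softObjective C w ξ ≤ softObjective C w' ξ') :
    (∀ i, ξ i = 0) ∧ HardSolution x y w b := by
  classical
  set P : Set E := convexHull ℝ (x '' {i | y i = 1}) with hP
  set M : Set E := convexHull ℝ (x '' {i | y i = -1}) with hM
  set G : ℝ := twoClassGap x y with hGdef
  set D : Set ℝ := {g : ℝ | ∃ cp ∈ P, ∃ cm ∈ M, g = ‖cp - cm‖} with hD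
  -- D is the image of a compact set
  have hDimg : D = (fun q : E × E => ‖q.1 - q.2‖) '' (P ×ˢ M) := by
    ext g
    constructor
    · rintro ⟨cp, hcp, cm, hcm, rfl⟩
      exact ⟨(cp, cm), ⟨hcp, hcm⟩, rfl⟩
    · rintro ⟨⟨cp, cm⟩, ⟨hcp, hcm⟩, rfl⟩
      exact ⟨cp, hcp, cm, hcm, rfl⟩
  have hPc : IsCompact P := ((Set.toFinite _).image x).isCompact_convexHull ℝ
  have hMc : IsCompact M := ((Set.toFinite _).image x).isCompact_convexHull ℝ
  obtain ⟨ip, hip⟩ := hpos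
  obtain ⟨im, him⟩ := hneg
  have hxP : ∀ i, y i = 1 → x i ∈ P := fun i hi =>
    subset_convexHull ℝ _ ⟨i, hi, rfl⟩
  have hxM : ∀ i, y i = -1 → x i ∈ M := fun i hi =>
    subset_convexHull ℝ _ ⟨i, hi, rfl⟩
  have hDc : IsCompact D := by
    rw [hDimg]
    exact (hPc.prod hMc).image (by fun_prop)
  have hDne : D.Nonempty := ⟨‖x ip - x im‖, x ip, hxP _ hip, x im, hxM _ him, rfl⟩
  have hGD : G ∈ D := hDc.sInf_mem hDne
  have hGlb : ∀ d ∈ D, G ≤ d := fun d hd => csInf_le hDc.bddBelow hd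
  obtain ⟨p, hp, m, hm, hpm⟩ := hGD
  -- positivity of the gap from separability
  obtain ⟨w₀, b₀, hw₀⟩ := hsep
  have hsep_ge : ∀ u ∈ P, 1 ≤ ⟪w₀, u⟫ + b₀ := by
    refine hull_halfspace_ge _ _ _ _ ?_
    rintro z ⟨i, hi, rfl⟩
    have := hw₀ i
    rw [hi] at this; linarith
  have hsep_le : ∀ v ∈ M, ⟪w₀, v⟫ + b₀ ≤ -1 := by
    refine hull_halfspace_le _ _ _ _ ?_
    rintro z ⟨i, hi, rfl⟩
    have := hw₀ i
    rw [hi] at this; linarith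
  have h2 : (2 : ℝ) ≤ ⟪w₀, p - m⟫ := by
    have h1 := hsep_ge p hp
    have h2 := hsep_le m hm
    rw [inner_sub_right]
    linarith
  have hGpos : 0 < G := by
    by_contra h
    push_neg at h
    have hcs := real_inner_le_norm w₀ (p - m)
    rw [← hpm] at hcs
    have : ‖w₀‖ * G ≤ 0 := mul_nonpos_of_nonneg_of_nonpos (norm_nonneg w₀) h
    linarith
  have hG2pos : 0 < G ^ 2 := by positivity
  -- variational inequalities for the closest pair
  have hPne : Nonempty P := ⟨⟨p, hp⟩⟩
  have hMne : Nonempty M := ⟨⟨m, hm⟩⟩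
  have hbddP : BddBelow (Set.range fun u : P => ‖m - (u : E)‖) :=
    ⟨0, by rintro _ ⟨u, rfl⟩; exact norm_nonneg _⟩
  have hbddM : BddBelow (Set.range fun v : M => ‖p - (v : E)‖) :=
    ⟨0, by rintro _ ⟨v, rfl⟩; exact norm_nonneg _⟩
  have hprojP : ∀ u ∈ P, ⟪m - p, u - p⟫ ≤ 0 := by
    rw [← norm_eq_iInf_iff_real_inner_le_zero (convex_convexHull ℝ _) hp]
    refine le_antisymm (le_ciInf fun u => ?_) (ciInf_le hbddP ⟨p, hp⟩)
    have h1 : G ≤ ‖(u : E) - m‖ := hGlb _ ⟨u, u.2, m, hm, rfl⟩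
    rw [norm_sub_rev m p, norm_sub_rev m (u : E), ← hpm]
    exact h1
  have hprojM : ∀ v ∈ M, ⟪p - m, v - m⟫ ≤ 0 := by
    rw [← norm_eq_iInf_iff_real_inner_le_zero (convex_convexHull ℝ _) hm]
    refine le_antisymm (le_ciInf fun v => ?_) (ciInf_le hbddM ⟨m, hm⟩)
    have h1 : G ≤ ‖p - (v : E)‖ := hGlb _ ⟨p, hp, v, v.2, rfl⟩
    rw [← hpm]
    exact h1
  have hPinner : ∀ u ∈ P, ⟪p - m, p⟫ ≤ ⟪p - m, u⟫ := by
    intro u hu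
    have := hprojP u hu
    simp only [inner_sub_left, inner_sub_right] at this ⊢
    linarith
  have hMinner : ∀ v ∈ M, ⟪p - m, v⟫ ≤ ⟪p - m, m⟫ := by
    intro v hv
    have := hprojM v hv
    simp only [inner_sub_right] at this
    linarith
  have hGsq : ⟪p - m, p⟫ - ⟪p - m, m⟫ = G ^ 2 := by
    have : ⟪p - m, p - m⟫ = ‖p - m‖ ^ 2 := real_inner_self_eq_norm_sq (p - m)
    rw [inner_sub_right, ← hpm] at this
    linarith
  -- the explicit hard-feasible point from the closest pair
  set K : ℝ := 2 / G ^ 2 with hK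
  have hKpos : 0 < K := by positivity
  set ws : E := K • (p - m) with hws
  set bs : ℝ := 1 - K * ⟪p - m, p⟫ with hbs
  have hws_inner : ∀ z : E, ⟪ws, z⟫ = K * ⟪p - m, z⟫ := fun z =>
    real_inner_smul_left _ _ _
  have hws_feas : HardFeasible x y ws bs := by
    intro i
    rcases hy i with hi | hi
    · rw [hi, one_mul, hws_inner, hbs]
      have := hPinner (x i) (hxP i hi)
      nlinarith
    · rw [hi]
      have := hMinner (x i) (hxM i hi)
      rw [hws_inner, hbs]
      have hKG : K * G ^ 2 = 2 := by
        rw [hK]; field_simp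
      nlinarith
  have hG2ne : G ^ 2 ≠ 0 := ne_of_gt hG2pos
  have hws_norm : ‖ws‖ ^ 2 = 4 / G ^ 2 := by
    have h1 : ‖ws‖ = K * ‖p - m‖ := by
      rw [hws, norm_smul, Real.norm_eq_abs, abs_of_pos hKpos]
    rw [h1, ← hpm, mul_pow, hK]
    field_simp
    ring
  -- the optimal soft objective is at most 2/G²
  have hsoft_ws : SoftFeasible x y ws bs (fun _ => 0) := fun i =>
    ⟨by simpa using hws_feas i, le_refl 0⟩
  have hobj : softObjective C w ξ ≤ 2 / G ^ 2 := by
    have h := hmin ws bs (fun _ => 0) hsoft_ws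
    simp only [softObjective, Finset.sum_const_zero, mul_zero, add_zero] at h
    rw [hws_norm] at h
    calc softObjective C w ξ ≤ (1 / 2) * (4 / G ^ 2) := h
    _ = 2 / G ^ 2 := by ring
  -- lower bound on the margin of (w, b) in terms of total slack
  set S : ℝ := ∑ i, ξ i with hS
  have hξ0 : ∀ i, 0 ≤ ξ i := fun i => (hfeas i).2
  have hS0 : 0 ≤ S := Finset.sum_nonneg fun i _ => hξ0 i
  set Sp : ℝ := ∑ i ∈ Finset.univ.filter (fun i => y i = 1), ξ i with hSp
  set Sm : ℝ := ∑ i ∈ Finset.univ.filter (fun i => y i = -1), ξ i with hSm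
  have hsum_le : Sp + Sm ≤ S := by
    have hsplit : Sp + ∑ i ∈ Finset.univ.filter (fun i => ¬ y i = 1), ξ i = S :=
      Finset.sum_filter_add_sum_filter_not Finset.univ (fun i => y i = 1) ξ
    have hsub : Sm ≤ ∑ i ∈ Finset.univ.filter (fun i => ¬ y i = 1), ξ i := by
      refine Finset.sum_le_sum_of_subset_of_nonneg ?_ (fun i _ _ => hξ0 i)
      intro i hi
      simp only [Finset.mem_filter, Finset.mem_univ, true_and] at hi ⊢
      rw [hi]; norm_num
    linarith
  have hPfeas : ∀ u ∈ P, 1 - Sp ≤ ⟪w, u⟫ + b := by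
    refine hull_halfspace_ge _ _ _ _ ?_
    rintro z ⟨i, hi, rfl⟩
    have h1 := (hfeas i).1
    rw [hi, one_mul] at h1
    have hi' : y i = 1 := hi
    have h2 : ξ i ≤ Sp :=
      Finset.single_le_sum (fun j _ => hξ0 j) (by simp [hi'])
    linarith
  have hMfeas : ∀ v ∈ M, ⟪w, v⟫ + b ≤ -1 + Sm := by
    refine hull_halfspace_le _ _ _ _ ?_
    rintro z ⟨i, hi, rfl⟩
    have h1 := (hfeas i).1
    rw [hi] at h1
    have hi' : y i = -1 := hi
    have h2 : ξ i ≤ Sm :=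
      Finset.single_le_sum (fun j _ => hξ0 j) (by simp [hi'])
    linarith
  have hmargin : 2 - S ≤ ⟪w, p - m⟫ := by
    have h1 := hPfeas p hp
    have h2 := hMfeas m hm
    rw [inner_sub_right]
    linarith
  have hwG : 2 - S ≤ ‖w‖ * G := by
    have hcs := real_inner_le_norm w (p - m)
    rw [← hpm] at hcs
    linarith
  -- conclude S = 0
  have hobj' : (1 / 2) * ‖w‖ ^ 2 + C * S ≤ 2 / G ^ 2 := by
    simp only [softObjective] at hobj
    rw [← hS] at hobj
    exact hobj
  have hCG : 2 < C * G ^ 2 := by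
    rw [div_lt_iff₀ hG2pos] at hC
    linarith
  have hSzero : S = 0 :=
    slack_eq_zero hGpos hS0 (norm_nonneg w) hwG hCG hobj'
  have hxi : ∀ i, ξ i = 0 := by
    intro i
    have hsum : ∑ j, ξ j = 0 := by rw [← hS]; exact hSzero
    exact (Finset.sum_eq_zero_iff_of_nonneg (fun j _ => hξ0 j)).mp hsum i (Finset.mem_univ i)
  refine ⟨hxi, ?_, ?_⟩
  · intro i
    have := (hfeas i).1
    rw [hxi i] at this
    linarith
  · intro w' b' hw'
    have h := hmin w' b' (fun _ => 0) (fun i => ⟨by simpa using hw' i, le_refl 0⟩)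
    simp only [softObjective, Finset.sum_const_zero, mul_zero, add_zero] at h
    rw [← hS, hSzero, mul_zero, add_zero] at h
    exact h
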